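/- (Complex Jarník theorem) Let 𝔅 = {z ∈ ℂ : there exists K > 0 such that |z − p/q| > K/|q|² for all Gaussian integers p, q with q ≠ 0} be the set of badly approximable complex numbers. Then 𝔅 is thick: for every disc B ⊆ ℂ of positive radius, dim_H(B ∩ 𝔅) = 2. -/

import Mathlib

/-- The set `𝔅` of badly approximable complex numbers: those `z` for which there is `K > 0`
with `|z - p/q| > K/|q|²` for all Gaussian integers `p`, `q` with `q ≠ 0`. -/
def badC : Set ℂ :=
  {z | ∃ K > (0 : ℝ), ∀ p q : GaussianInt, q ≠ 0 →
    K / ‖(q : ℂ)‖ ^ 2 < ‖z - (p : ℂ) / (q : ℂ)‖}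

open MeasureTheory Filter Set

namespace Jarnik

/-- side length of level-`n` squares -/
noncomputable def w (N : ℕ) (δ : ℝ) (n : ℕ) : ℝ := δ / (N : ℝ) ^ n

/-- the closed grid square of level `n`, index `k`, anchored at `z₀` -/
noncomputable def Sq (N : ℕ) (δ : ℝ) (z₀ : ℂ) (n : ℕ) (k : ℤ × ℤ) : Set ℂ :=
  {z | z₀.re + k.1 * w N δ n ≤ z.re ∧ z.re ≤ z₀.re + (k.1 + 1) * w N δ n ∧
       z₀.im + k.2 * w N δ n ≤ z.im ∧ z.im ≤ z₀.im + (k.2 + 1) * w N δ n}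

/-- denominator threshold at level `n` -/
noncomputable def Th (N : ℕ) (δ : ℝ) (n : ℕ) : ℝ := (N : ℝ) ^ n / (4 * N * δ)

/-- the badly-approximable constant -/
noncomputable def KK (N : ℕ) : ℝ := 1 / (16 * N)

/-- invariant: the square avoids all dangerous balls with denominators up to `Th n` -/
def Good (N : ℕ) (δ : ℝ) (z₀ : ℂ) (n : ℕ) (k : ℤ × ℤ) : Prop :=
  ∀ p q : GaussianInt, q ≠ 0 → ‖(q : ℂ)‖ ^ 2 ≤ Th N δ n →
    ∀ z ∈ Sq N δ z₀ n k,
      KK N / ‖(q : ℂ)‖ ^ 2 < ‖z - (p : ℂ) / (q : ℂ)‖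

def L (N : ℕ) : ℕ := N / 4 + 2
def M1 (N : ℕ) : ℕ := N - 2 * L N
def M (N : ℕ) : ℕ := M1 N * N

/-- set of dangerous Gaussian rationals near the square at the current scale -/
noncomputable def Rset (N : ℕ) (δ : ℝ) (z₀ : ℂ) (n : ℕ) (k : ℤ × ℤ) : Set ℂ :=
  {v | (∃ p q : GaussianInt, q ≠ 0 ∧ ‖(q : ℂ)‖ ^ 2 ≤ Th N δ (n + 1) ∧
          v = (p : ℂ) / (q : ℂ)) ∧
       ∃ z ∈ Sq N δ z₀ n k, ‖z - v‖ ≤ w N δ n / 4}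

open Classical in
/-- the (relative) index of the column containing the dangerous point, if any -/
noncomputable def tcol (N : ℕ) (δ : ℝ) (z₀ : ℂ) (n : ℕ) (k : ℤ × ℤ) : ℤ :=
  if h : (Rset N δ z₀ n k).Nonempty then
    ⌊(h.choose.re - z₀.re) / w N δ (n + 1)⌋ - N * k.1
  else 0

/-- selection of safe columns, avoiding a window of width `2L` around `t` -/
def gcol (N : ℕ) (t : ℤ) (j : ℕ) : ℤ :=
  if (j : ℤ) ≤ t - L N then (j : ℤ) else (j : ℤ) + (2 * L N - 1)

/-- the `dd`-th selected child of square `k` at level `n` -/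
noncomputable def child (N : ℕ) (δ : ℝ) (z₀ : ℂ) (n : ℕ) (k : ℤ × ℤ) (dd : ℕ) : ℤ × ℤ :=
  (N * k.1 + gcol N (tcol N δ z₀ n k) (dd / N), N * k.2 + (dd % N : ℕ))

/-- address of the square selected by digit string (base `M`) -/
noncomputable def F (N : ℕ) (δ : ℝ) (z₀ : ℂ) : ℕ → ℕ → ℤ × ℤ
  | 0, _ => (0, 0)
  | n + 1, m => child N δ z₀ n (F N δ z₀ n (m / M N)) (m % M N)

/-- the address of the level-`n` square containing the point coded by `x` -/
noncomputable def idx (N : ℕ) (δ : ℝ) (z₀ : ℂ) (n : ℕ) (x : ℝ) : ℤ × ℤ :=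
  F N δ z₀ n (⌊Int.fract x * (M N : ℝ) ^ n⌋).toNat

/-- center of the level-`n` square containing the point coded by `x` -/
noncomputable def cent (N : ℕ) (δ : ℝ) (z₀ : ℂ) (n : ℕ) (x : ℝ) : ℂ :=
  ⟨z₀.re + (idx N δ z₀ n x).1 * w N δ n + w N δ n / 2,
   z₀.im + (idx N δ z₀ n x).2 * w N δ n + w N δ n / 2⟩

/-- the limit point coded by `x` -/
noncomputable def Phi (N : ℕ) (δ : ℝ) (z₀ : ℂ) (x : ℝ) : ℂ :=
  limUnder atTop (fun n => cent N δ z₀ n x)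

section Basic

variable {N : ℕ} {δ : ℝ} {z₀ : ℂ} (hN : 16 ≤ N) (hδ : 0 < δ)

include hN in lemma M1_ge : N / 4 ≤ M1 N := by
  show N / 4 ≤ N - 2 * (N / 4 + 2); omega

include hN in lemma M1_le : M1 N + 2 * L N = N := by
  show N - 2 * (N / 4 + 2) + 2 * (N / 4 + 2) = N; omega

include hN in lemma M_pos : 0 < M N := by
  have h := M1_ge hN; have : 4 ≤ N / 4 := by omega
  unfold M; exact Nat.mul_pos (by omega) (by omega)

include hN hδ in lemma w_pos (n : ℕ) : 0 < w N δ n := by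
  have h0 : (0:ℝ) < N := by have : 0 < N := by omega
                            exact_mod_cast this
  unfold w; positivity

include hN in lemma w_succ (n : ℕ) : w N δ (n + 1) * N = w N δ n := by
  have h0 : (0:ℝ) < N := by have : 0 < N := by omega
                            exact_mod_cast this
  rw [w, w, pow_succ]; field_simp

include hN hδ in lemma w_anti (n : ℕ) : w N δ (n + 1) ≤ w N δ n := by
  have h1 : (1:ℝ) ≤ N := by have : 1 ≤ N := by omega
                            exact_mod_cast this
  exact div_le_div_of_nonneg_left hδ.le (by positivity)
    (pow_le_pow_right₀ h1 (Nat.le_succ n))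

include hN hδ in lemma Th_pos (n : ℕ) : 0 < Th N δ n := by
  have h0 : (0:ℝ) < N := by have : 0 < N := by omega
                            exact_mod_cast this
  unfold Th; positivity

lemma Th_succ (n : ℕ) : Th N δ (n + 1) = N * Th N δ n := by
  unfold Th; rw [pow_succ]; ring

include hN hδ in lemma Th_w (n : ℕ) : Th N δ (n + 1) * (4 * w N δ n) = 1 := by
  have h0 : (0:ℝ) < N := by have : 0 < N := by omega
                            exact_mod_cast this
  have : (N:ℝ) ^ n ≠ 0 := by positivity
  rw [Th, w, pow_succ]; field_simp

include hN in lemma KK_pos : 0 < KK N := by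
  have h0 : (0:ℝ) < N := by have : 0 < N := by omega
                            exact_mod_cast this
  unfold KK; positivity

/-- `Sq` is closed -/
lemma isClosed_Sq (n : ℕ) (k : ℤ × ℤ) : IsClosed (Sq N δ z₀ n k) := by
  unfold Sq
  apply IsClosed.inter (isClosed_le continuous_const Complex.continuous_re)
  apply IsClosed.inter (isClosed_le Complex.continuous_re continuous_const)
  exact IsClosed.inter (isClosed_le continuous_const Complex.continuous_im)
    (isClosed_le Complex.continuous_im continuous_const)

lemma measurableSet_Sq (n : ℕ) (k : ℤ × ℤ) : MeasurableSet (Sq N δ z₀ n k) :=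
  (isClosed_Sq n k).measurableSet

include hN hδ in
/-- tiling: every point belongs to the square given by floors -/
lemma mem_Sq_floor (n : ℕ) (z : ℂ) :
    z ∈ Sq N δ z₀ n (⌊(z.re - z₀.re) / w N δ n⌋, ⌊(z.im - z₀.im) / w N δ n⌋) := by
  have hw := w_pos hN hδ n
  have h1 := Int.floor_le ((z.re - z₀.re) / w N δ n)
  have h2 := Int.lt_floor_add_one ((z.re - z₀.re) / w N δ n)
  have h3 := Int.floor_le ((z.im - z₀.im) / w N δ n)
  have h4 := Int.lt_floor_add_one ((z.im - z₀.im) / w N δ n)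
  have e1 : (⌊(z.re - z₀.re) / w N δ n⌋ : ℝ) * w N δ n ≤ z.re - z₀.re := by
    rw [← le_div_iff₀ hw] ; exact h1
  have e2 : z.re - z₀.re ≤ (⌊(z.re - z₀.re) / w N δ n⌋ + 1 : ℝ) * w N δ n := by
    rw [← div_le_iff₀ hw]; exact le_of_lt h2
  have e3 : (⌊(z.im - z₀.im) / w N δ n⌋ : ℝ) * w N δ n ≤ z.im - z₀.im := by
    rw [← le_div_iff₀ hw] ; exact h3
  have e4 : z.im - z₀.im ≤ (⌊(z.im - z₀.im) / w N δ n⌋ + 1 : ℝ) * w N δ n := by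
    rw [← div_le_iff₀ hw]; exact le_of_lt h4
  refine ⟨by push_cast; linarith, by push_cast; linarith, by push_cast; linarith,
    by push_cast; linarith⟩

include hN hδ in
/-- children are inside the parent -/
lemma Sq_child_subset (n : ℕ) (k : ℤ × ℤ) {a b : ℤ} (ha0 : 0 ≤ a) (haN : a < N)
    (hb0 : 0 ≤ b) (hbN : b < N) :
    Sq N δ z₀ (n + 1) (N * k.1 + a, N * k.2 + b) ⊆ Sq N δ z₀ n k := by
  intro z hz
  obtain ⟨h1, h2, h3, h4⟩ := hz
  have hw := w_pos hN hδ (n + 1)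
  have hws := w_succ (δ := δ) hN n
  have ha0' : (0:ℝ) ≤ a := by exact_mod_cast ha0
  have hb0' : (0:ℝ) ≤ b := by exact_mod_cast hb0
  have hare' : (a:ℝ) + 1 ≤ N := by exact_mod_cast haN
  have hbre' : (b:ℝ) + 1 ≤ N := by exact_mod_cast hbN
  have q1 : (0:ℝ) ≤ (a:ℝ) * w N δ (n+1) := mul_nonneg ha0' hw.le
  have q2 : ((a:ℝ) + 1) * w N δ (n+1) ≤ N * w N δ (n+1) :=
    mul_le_mul_of_nonneg_right hare' hw.le
  have q3 : (0:ℝ) ≤ (b:ℝ) * w N δ (n+1) := mul_nonneg hb0' hw.le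
  have q4 : ((b:ℝ) + 1) * w N δ (n+1) ≤ N * w N δ (n+1) :=
    mul_le_mul_of_nonneg_right hbre' hw.le
  simp only [Sq, Set.mem_setOf_eq] at *
  rw [← hws] at *
  push_cast at h1 h2 h3 h4 ⊢
  refine ⟨by nlinarith, by nlinarith, by nlinarith, by nlinarith⟩

include hN hδ in
/-- diameter-type bound inside one square -/
lemma Sq_dist_le (n : ℕ) (k : ℤ × ℤ) {z z' : ℂ} (hz : z ∈ Sq N δ z₀ n k)
    (hz' : z' ∈ Sq N δ z₀ n k) : ‖z - z'‖ ≤ 2 * w N δ n := by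
  obtain ⟨a1, a2, a3, a4⟩ := hz
  obtain ⟨b1, b2, b3, b4⟩ := hz'
  calc ‖z - z'‖ ≤ |(z - z').re| + |(z - z').im| :=
        Complex.norm_le_abs_re_add_abs_im _
    _ ≤ 2 * w N δ n := by
        simp only [Complex.sub_re, Complex.sub_im]
        have e1 : |z.re - z'.re| ≤ w N δ n := abs_sub_le_iff.mpr ⟨by linarith, by linarith⟩
        have e2 : |z.im - z'.im| ≤ w N δ n := abs_sub_le_iff.mpr ⟨by linarith, by linarith⟩
        linarith
        
end Basic

end Jarnik
section PartB

namespace Jarnik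
open MeasureTheory Filter Set
variable {N : ℕ} {δ : ℝ} {z₀ : ℂ} (hN : 16 ≤ N) (hδ : 0 < δ)

include hN in
lemma gcol_nonneg (t : ℤ) (j : ℕ) : 0 ≤ gcol N t j := by
  unfold gcol L; split_ifs <;> omega

include hN in
lemma gcol_lt (t : ℤ) {j : ℕ} (hj : j < M1 N) : gcol N t j < N := by
  have h := M1_le hN
  unfold M1 L at *
  unfold gcol L; split_ifs <;> omega

include hN in
lemma gcol_injOn (t : ℤ) {j j' : ℕ} (hjj : gcol N t j = gcol N t j') : j = j' := by
  unfold gcol L at hjj; split_ifs at hjj <;> omega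

lemma gcol_safe (t : ℤ) (j : ℕ) : gcol N t j ≤ t - L N ∨ t + L N ≤ gcol N t j := by
  unfold gcol; split_ifs with h
  · exact Or.inl h
  · right; unfold L at *; omega

/-- nonzero Gaussian integers have absolute value at least 1 -/
lemma one_le_abs_gauss {g : GaussianInt} (hg : g ≠ 0) : 1 ≤ ‖(g : ℂ)‖ := by
  have h2 : ‖(g : ℂ)‖ ^ 2 = (g.norm : ℝ) := by
    rw [Complex.sq_norm, ← GaussianInt.intCast_real_norm]
  have h1 : (1 : ℝ) ≤ (g.norm : ℝ) := by
    have := GaussianInt.norm_pos.mpr hg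
    exact_mod_cast this
  nlinarith [norm_nonneg (g : ℂ)]

lemma abs_gauss_pos {g : GaussianInt} (hg : g ≠ 0) : 0 < ‖(g : ℂ)‖ :=
  lt_of_lt_of_le one_pos (one_le_abs_gauss hg)

/-- separation of Gaussian rationals with bounded denominators -/
lemma sep {p₁ q₁ p₂ q₂ : GaussianInt} (h₁ : q₁ ≠ 0) (h₂ : q₂ ≠ 0) {T : ℝ}
    (hT₁ : ‖(q₁ : ℂ)‖ ^ 2 ≤ T) (hT₂ : ‖(q₂ : ℂ)‖ ^ 2 ≤ T)
    (hne : (p₁ : ℂ) / (q₁ : ℂ) ≠ (p₂ : ℂ) / (q₂ : ℂ)) :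
    1 / T ≤ ‖(p₁ : ℂ) / (q₁ : ℂ) - (p₂ : ℂ) / (q₂ : ℂ)‖ := by
  have hq1C : (q₁ : ℂ) ≠ 0 := fun h => h₁ (GaussianInt.toComplex_eq_zero.mp h)
  have hq2C : (q₂ : ℂ) ≠ 0 := fun h => h₂ (GaussianInt.toComplex_eq_zero.mp h)
  set d : GaussianInt := p₁ * q₂ - p₂ * q₁ with hd
  have hdC : (d : ℂ) = (p₁ : ℂ) * (q₂ : ℂ) - (p₂ : ℂ) * (q₁ : ℂ) := by
    rw [hd, GaussianInt.toComplex_sub, GaussianInt.toComplex_mul, GaussianInt.toComplex_mul]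
  have key : (p₁ : ℂ) / (q₁ : ℂ) - (p₂ : ℂ) / (q₂ : ℂ) = (d : ℂ) / ((q₁ : ℂ) * (q₂ : ℂ)) := by
    rw [hdC]; field_simp
  have hdne : d ≠ 0 := by
    intro h
    apply hne
    have h0 : (d : ℂ) = 0 := by rw [h]; exact GaussianInt.toComplex_zero
    rw [h0, zero_div] at key
    exact sub_eq_zero.mp key
  have h1d : 1 ≤ ‖(d : ℂ)‖ := one_le_abs_gauss hdne
  have ha1 : 0 < ‖(q₁ : ℂ)‖ := abs_gauss_pos h₁
  have ha2 : 0 < ‖(q₂ : ℂ)‖ := abs_gauss_pos h₂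
  have hprod : ‖(q₁ : ℂ)‖ * ‖(q₂ : ℂ)‖ ≤ T := by
    nlinarith [sq_nonneg (‖(q₁ : ℂ)‖ - ‖(q₂ : ℂ)‖)]
  have hprodpos : 0 < ‖(q₁ : ℂ)‖ * ‖(q₂ : ℂ)‖ := mul_pos ha1 ha2
  rw [key, norm_div, norm_mul]
  calc 1 / T ≤ 1 / (‖(q₁ : ℂ)‖ * ‖(q₂ : ℂ)‖) :=
        one_div_le_one_div_of_le hprodpos hprod
    _ ≤ ‖(d : ℂ)‖ / (‖(q₁ : ℂ)‖ * ‖(q₂ : ℂ)‖) := by gcongr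

include hN hδ in
/-- at most one dangerous Gaussian rational near a good square -/
lemma Rset_subsingleton (n : ℕ) (k : ℤ × ℤ) :
    ∀ v₁ ∈ Rset N δ z₀ n k, ∀ v₂ ∈ Rset N δ z₀ n k, v₁ = v₂ := by
  rintro v₁ ⟨⟨p₁, q₁, hq₁, hle₁, rfl⟩, z₁, hz₁, hd₁⟩ v₂ ⟨⟨p₂, q₂, hq₂, hle₂, rfl⟩, z₂, hz₂, hd₂⟩
  by_contra hne
  have hsep := sep hq₁ hq₂ hle₁ hle₂ hne
  have hTw := Th_w hN hδ (δ := δ) n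
  have hone : 1 / Th N δ (n + 1) = 4 * w N δ n :=
    (eq_one_div_of_mul_eq_one_left (by linarith [hTw])).symm
  have hwn := w_pos hN hδ n
  have htri : ‖(p₁ : ℂ) / (q₁ : ℂ) - (p₂ : ℂ) / (q₂ : ℂ)‖ ≤ 5 / 2 * w N δ n := by
    have t1 : ‖(p₁ : ℂ) / (q₁ : ℂ) - (p₂ : ℂ) / (q₂ : ℂ)‖ ≤
        ‖(p₁ : ℂ) / (q₁ : ℂ) - z₁‖ + ‖z₁ - z₂‖ +
        ‖z₂ - (p₂ : ℂ) / (q₂ : ℂ)‖ := by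
      have e : (p₁ : ℂ) / (q₁ : ℂ) - (p₂ : ℂ) / (q₂ : ℂ) =
          ((p₁ : ℂ) / (q₁ : ℂ) - z₁) + (z₁ - z₂) + (z₂ - (p₂ : ℂ) / (q₂ : ℂ)) := by ring
      rw [e]
      exact le_trans (norm_add_le _ _)
        (add_le_add_left (norm_add_le _ _) _)
    have t2 : ‖(p₁ : ℂ) / (q₁ : ℂ) - z₁‖ ≤ w N δ n / 4 := by
      rwa [norm_sub_rev]
    have t3 := Sq_dist_le (hN := hN) (hδ := hδ) n k hz₁ hz₂
    linarith
  rw [hone] at hsep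
  linarith

set_option maxHeartbeats 2000000 in
include hN hδ in
/-- Core step: each selected child of a good square is good -/
lemma good_child (n : ℕ) (k : ℤ × ℤ) (hg : Good N δ z₀ n k) {dd : ℕ} (hdd : dd < M N) :
    Good N δ z₀ (n + 1) (child N δ z₀ n k dd) := by
  intro p q hq hqle z hz
  have hw' := w_pos hN hδ (n + 1)
  have hwn := w_pos hN hδ n
  have hws := w_succ (δ := δ) hN n
  have hMN : 0 < N := by omega
  have hjM1 : dd / N < M1 N := by
    rw [Nat.div_lt_iff_lt_mul hMN]; exact hdd
  set t := tcol N δ z₀ n k with htdef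
  set a : ℤ := gcol N t (dd / N) with hadef
  have ha0 : 0 ≤ a := gcol_nonneg hN t _
  have haN : a < N := gcol_lt hN t hjM1
  have hb0 : (0:ℤ) ≤ (dd % N : ℕ) := Int.ofNat_nonneg _
  have hbN : ((dd % N : ℕ) : ℤ) < N := by exact_mod_cast Nat.mod_lt dd hMN
  have hsub : Sq N δ z₀ (n + 1) (child N δ z₀ n k dd) ⊆ Sq N δ z₀ n k :=
    Sq_child_subset hN hδ n k ha0 haN hb0 hbN
  have hzS : z ∈ Sq N δ z₀ n k := hsub hz
  by_cases hsmall : ‖(q : ℂ)‖ ^ 2 ≤ Th N δ n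
  · exact hg p q hq hsmall z hzS
  push_neg at hsmall
  by_contra hcon
  push_neg at hcon
  -- the ball is small
  have habs2 : (0:ℝ) < ‖(q : ℂ)‖ ^ 2 := by
    have := abs_gauss_pos hq; positivity
  have hKTh : KK N / Th N δ n = w N δ n / 4 := by
    have hNr : (0:ℝ) < N := by exact_mod_cast hMN
    have hpow : (0:ℝ) < (N:ℝ) ^ n := by positivity
    rw [KK, Th, w]; field_simp
    ring
  have hrad : KK N / ‖(q : ℂ)‖ ^ 2 < w N δ n / 4 := by
    rw [← hKTh]
    exact div_lt_div_of_pos_left (KK_pos hN) (Th_pos hN hδ n) hsmall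
  -- hence p/q is a dangerous point
  have hvR : ((p : ℂ) / (q : ℂ)) ∈ Rset N δ z₀ n k :=
    ⟨⟨p, q, hq, hqle, rfl⟩, z, hzS, le_trans hcon hrad.le⟩
  have hRne : (Rset N δ z₀ n k).Nonempty := ⟨_, hvR⟩
  have hchoose : hRne.choose = (p : ℂ) / (q : ℂ) :=
    Rset_subsingleton hN hδ n k _ hRne.choose_spec _ hvR
  have ht : t = ⌊(((p : ℂ) / (q : ℂ)).re - z₀.re) / w N δ (n + 1)⌋ - N * k.1 := by
    rw [htdef]; unfold tcol
    rw [dif_pos hRne, hchoose]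
  -- column coordinates of the dangerous point
  set vre : ℝ := ((p : ℂ) / (q : ℂ)).re with hvre
  have hfl1 : ((N * k.1 + t : ℤ) : ℝ) * w N δ (n + 1) ≤ vre - z₀.re := by
    have h1 : ((⌊(vre - z₀.re) / w N δ (n + 1)⌋ : ℤ) : ℝ) ≤ (vre - z₀.re) / w N δ (n + 1) :=
      Int.floor_le _
    have e : (N * k.1 + t : ℤ) = ⌊(vre - z₀.re) / w N δ (n + 1)⌋ := by rw [ht]; ring
    rw [e]
    rw [← le_div_iff₀ hw']
    exact h1
  have hfl2 : vre - z₀.re < ((N * k.1 + t + 1 : ℤ) : ℝ) * w N δ (n + 1) := by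
    have h2 := Int.lt_floor_add_one ((vre - z₀.re) / w N δ (n + 1))
    have e : (N * k.1 + t + 1 : ℤ) = ⌊(vre - z₀.re) / w N δ (n + 1)⌋ + 1 := by rw [ht]; ring
    rw [e]
    rw [← div_lt_iff₀ hw']
    exact_mod_cast h2
  -- safe column distance
  have hsafe : a ≤ t - L N ∨ t + L N ≤ a := by
    rw [hadef]; exact gcol_safe t (dd / N)
  have hL : (N : ℝ) / 4 ≤ (L N : ℝ) - 1 := by
    have h : N + 4 ≤ 4 * (L N) := by unfold L; omega
    have h4 : (N:ℝ) + 4 ≤ 4 * (L N : ℝ) := by exact_mod_cast h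
    linarith
  have hLw : w N δ n / 4 ≤ ((L N : ℝ) - 1) * w N δ (n + 1) := by
    rw [← hws]
    calc w N δ (n + 1) * N / 4 = (N / 4 : ℝ) * w N δ (n + 1) := by ring
      _ ≤ ((L N : ℝ) - 1) * w N δ (n + 1) := by
          exact mul_le_mul_of_nonneg_right hL hw'.le
  -- z's real part is in the child's column
  obtain ⟨hz1, hz2, _, _⟩ := hz
  have hch1 : (child N δ z₀ n k dd).1 = N * k.1 + a := rfl
  rw [hch1] at hz1 hz2
  -- the contradiction via real parts
  have hfl1' : z₀.re + ((N:ℝ) * k.1 + t) * w N δ (n + 1) ≤ vre := by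
    push_cast at hfl1; linarith
  have hfl2' : vre < z₀.re + ((N:ℝ) * k.1 + t + 1) * w N δ (n + 1) := by
    push_cast at hfl2; linarith
  have hz1' : z₀.re + ((N:ℝ) * k.1 + a) * w N δ (n + 1) ≤ z.re := by
    push_cast at hz1; linarith
  have hz2' : z.re ≤ z₀.re + ((N:ℝ) * k.1 + a + 1) * w N δ (n + 1) := by
    push_cast at hz2; linarith
  clear_value vre t a
  have hre : w N δ n / 4 ≤ |z.re - vre| := by
    rcases hsafe with hcase | hcase
    · -- a ≤ t - L : z.re is far below vre
      have hc : (a : ℝ) ≤ (t : ℝ) - (L N : ℝ) := by exact_mod_cast hcase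
      have hprod : (0:ℝ) ≤ ((t:ℝ) - (L N : ℝ) - a) * w N δ (n + 1) :=
        mul_nonneg (by linarith) hw'.le
      have key : z.re ≤ vre - ((L N : ℝ) - 1) * w N δ (n + 1) := by linarith
      rw [abs_sub_comm, abs_of_nonneg (by linarith : (0:ℝ) ≤ vre - z.re)]
      linarith
    · -- t + L ≤ a : z.re is far above vre
      have hc : (t : ℝ) + (L N : ℝ) ≤ (a : ℝ) := by exact_mod_cast hcase
      have hprod : (0:ℝ) ≤ ((a:ℝ) - t - L N) * w N δ (n + 1) :=
        mul_nonneg (by linarith) hw'.le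
      have key : vre + ((L N : ℝ) - 1) * w N δ (n + 1) ≤ z.re := by linarith
      rw [abs_of_nonneg (by linarith : (0:ℝ) ≤ z.re - vre)]
      linarith
  have hfinal : w N δ n / 4 ≤ ‖z - (p : ℂ) / (q : ℂ)‖ := by
    calc w N δ n / 4 ≤ |z.re - vre| := hre
      _ = |(z - (p : ℂ) / (q : ℂ)).re| := by rw [Complex.sub_re, hvre]
      _ ≤ ‖z - (p : ℂ) / (q : ℂ)‖ := Complex.abs_re_le_norm _
  linarith [lt_of_le_of_lt hcon hrad]

end Jarnik
end PartB
section PartC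
namespace Jarnik
open MeasureTheory Filter Set
variable {N : ℕ} {δ : ℝ} {z₀ : ℂ} (hN : 16 ≤ N) (hδ : 0 < δ)

lemma int_grid {D k k' g g' : ℤ} (hD : 0 < D) (h0 : 0 ≤ g) (h1 : g < D)
    (h0' : 0 ≤ g') (h1' : g' < D) (h : D * k + g = D * k' + g') : k = k' ∧ g = g' := by
  have e1 : (g + D * k) / D = k := by
    rw [Int.add_mul_ediv_left g k hD.ne', Int.ediv_eq_zero_of_lt h0 h1, zero_add]
  have e2 : (g' + D * k') / D = k' := by
    rw [Int.add_mul_ediv_left g' k' hD.ne', Int.ediv_eq_zero_of_lt h0' h1', zero_add]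
  have he : g + D * k = g' + D * k' := by linarith
  have hkk : k = k' := by rw [← e1, ← e2, he]
  subst hkk
  refine ⟨rfl, by linarith⟩

include hN in
lemma child_inj {n : ℕ} {k k' : ℤ × ℤ} {dd dd' : ℕ} (hdd : dd < M N) (hdd' : dd' < M N)
    (h : child N δ z₀ n k dd = child N δ z₀ n k' dd') : k = k' ∧ dd = dd' := by
  have hMN : 0 < N := by omega
  have hj : dd / N < M1 N := by rw [Nat.div_lt_iff_lt_mul hMN]; exact hdd
  have hj' : dd' / N < M1 N := by rw [Nat.div_lt_iff_lt_mul hMN]; exact hdd'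
  have h1 := congrArg Prod.fst h
  have h2 := congrArg Prod.snd h
  simp only [child] at h1 h2
  have hNZ : (0:ℤ) < (N:ℤ) := by exact_mod_cast hMN
  have g0 := gcol_nonneg hN (tcol N δ z₀ n k) (dd / N)
  have g1 := gcol_lt hN (tcol N δ z₀ n k) hj
  have g0' := gcol_nonneg hN (tcol N δ z₀ n k') (dd' / N)
  have g1' := gcol_lt hN (tcol N δ z₀ n k') hj'
  have hb0 : (0:ℤ) ≤ ((dd % N : ℕ) : ℤ) := Int.ofNat_nonneg _
  have hbN : ((dd % N : ℕ) : ℤ) < N := by exact_mod_cast Nat.mod_lt dd hMN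
  have hb0' : (0:ℤ) ≤ ((dd' % N : ℕ) : ℤ) := Int.ofNat_nonneg _
  have hbN' : ((dd' % N : ℕ) : ℤ) < N := by exact_mod_cast Nat.mod_lt dd' hMN
  obtain ⟨hk1, hg1⟩ := int_grid hNZ g0 g1 g0' g1' h1
  obtain ⟨hk2, hg2⟩ := int_grid hNZ hb0 hbN hb0' hbN' h2
  have hkk : k = k' := Prod.ext hk1 hk2
  subst hkk
  have hdiv : dd / N = dd' / N := gcol_injOn hN _ hg1
  have hmod : dd % N = dd' % N := by exact_mod_cast hg2
  refine ⟨rfl, ?_⟩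
  rw [← Nat.div_add_mod dd N, ← Nat.div_add_mod dd' N, hdiv, hmod]

include hN in
lemma F_inj : ∀ n : ℕ, ∀ m m' : ℕ, m < M N ^ n → m' < M N ^ n →
    F N δ z₀ n m = F N δ z₀ n m' → m = m' := by
  intro n
  induction n with
  | zero =>
    intro m m' hm hm' _
    simp only [pow_zero, Nat.lt_one_iff] at hm hm'
    omega
  | succ n ih =>
    intro m m' hm hm' h
    have hM := M_pos hN
    have hdd : m % M N < M N := Nat.mod_lt _ hM
    have hdd' : m' % M N < M N := Nat.mod_lt _ hM
    have h' : child N δ z₀ n (F N δ z₀ n (m / M N)) (m % M N) =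
        child N δ z₀ n (F N δ z₀ n (m' / M N)) (m' % M N) := h
    obtain ⟨hk, hd⟩ := child_inj hN hdd hdd' h'
    have hdiv : m / M N = m' / M N := by
      apply ih
      · rw [Nat.div_lt_iff_lt_mul hM]; rw [pow_succ] at hm; exact hm
      · rw [Nat.div_lt_iff_lt_mul hM]; rw [pow_succ] at hm'; exact hm'
      · exact hk
    rw [← Nat.div_add_mod m (M N), ← Nat.div_add_mod m' (M N), hdiv, hd]

include hN hδ in
lemma good_root (hδ2 : 1 < 4 * N * δ) : Good N δ z₀ 0 ((0 : ℤ), (0 : ℤ)) := by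
  intro p q hq hle z _
  exfalso
  have h1 : (1:ℝ) ≤ ‖(q : ℂ)‖ ^ 2 := by
    have := one_le_abs_gauss hq; nlinarith
  have hT : Th N δ 0 < 1 := by
    have hNpos : (0:ℝ) < 4 * N * δ := by linarith
    rw [Th, pow_zero]
    rw [div_lt_one hNpos]
    exact hδ2
  linarith

include hN hδ in
lemma good_F (hδ2 : 1 < 4 * N * δ) : ∀ n m, Good N δ z₀ n (F N δ z₀ n m) := by
  intro n
  induction n with
  | zero => intro m; exact good_root hN hδ hδ2
  | succ n ih =>
    intro m
    have hM := M_pos hN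
    exact good_child hN hδ n _ (ih (m / M N)) (Nat.mod_lt _ hM)

/-- the `n`-th digit data: floor of `fract x * M^n`, as a natural number -/
noncomputable def yfl (N : ℕ) (x : ℝ) (n : ℕ) : ℕ := (⌊Int.fract x * (M N : ℝ) ^ n⌋).toNat

lemma yfl_floor (hM : 0 < M N) (x : ℝ) (n : ℕ) :
    (yfl N x n : ℤ) = ⌊Int.fract x * (M N : ℝ) ^ n⌋ := by
  have h0 : (0:ℤ) ≤ ⌊Int.fract x * (M N : ℝ) ^ n⌋ := by
    apply Int.floor_nonneg.mpr
    have := Int.fract_nonneg x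
    positivity
  exact Int.toNat_of_nonneg h0

lemma yfl_lt (hM : 0 < M N) (x : ℝ) (n : ℕ) : yfl N x n < M N ^ n := by
  have hMr : (0:ℝ) < (M N : ℝ) ^ n := by positivity
  have h1 : Int.fract x * (M N : ℝ) ^ n < (M N : ℝ) ^ n := by
    nlinarith [Int.fract_lt_one x, Int.fract_nonneg x]
  have h2 : ⌊Int.fract x * (M N : ℝ) ^ n⌋ < (M N ^ n : ℤ) := by
    apply Int.floor_lt.mpr
    push_cast
    exact h1
  have h3 : (yfl N x n : ℤ) < (M N ^ n : ℤ) := by rw [yfl_floor hM x n]; exact h2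
  exact_mod_cast h3

lemma yfl_succ_div (hM : 0 < M N) (x : ℝ) (n : ℕ) :
    yfl N x (n + 1) / M N = yfl N x n := by
  set y := Int.fract x with hy
  have hy0 : 0 ≤ y := Int.fract_nonneg x
  have hMr : (0:ℝ) < (M N : ℝ) := by exact_mod_cast hM
  have hMn : (0:ℝ) < (M N : ℝ) ^ n := by positivity
  set m : ℤ := ⌊y * (M N : ℝ) ^ n⌋ with hm
  have hml : (m:ℝ) ≤ y * (M N : ℝ) ^ n := Int.floor_le _
  have hmu : y * (M N : ℝ) ^ n < (m:ℝ) + 1 := Int.lt_floor_add_one _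
  have hlow : (M N : ℤ) * m ≤ ⌊y * (M N : ℝ) ^ (n + 1)⌋ := by
    apply Int.le_floor.mpr
    push_cast
    calc ((M N : ℝ)) * m ≤ (M N : ℝ) * (y * (M N : ℝ) ^ n) := by nlinarith
      _ = y * (M N : ℝ) ^ (n + 1) := by ring
  have hhigh : ⌊y * (M N : ℝ) ^ (n + 1)⌋ < (M N : ℤ) * (m + 1) := by
    apply Int.floor_lt.mpr
    push_cast
    calc y * (M N : ℝ) ^ (n + 1) = (M N : ℝ) * (y * (M N : ℝ) ^ n) := by ring
      _ < (M N : ℝ) * ((m:ℝ) + 1) := by nlinarith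
  have e1 := yfl_floor (N := N) hM x (n + 1)
  have e2 := yfl_floor (N := N) hM x n
  rw [← hy] at e1 e2
  rw [← hm] at e2
  have hlow' : M N * yfl N x n ≤ yfl N x (n + 1) := by
    have : ((M N * yfl N x n : ℕ) : ℤ) ≤ (yfl N x (n + 1) : ℤ) := by
      push_cast only [Nat.cast_mul]; rw [e1, e2]; exact hlow
    exact_mod_cast this
  have hhigh' : yfl N x (n + 1) < M N * (yfl N x n + 1) := by
    have : (yfl N x (n + 1) : ℤ) < ((M N * (yfl N x n + 1) : ℕ) : ℤ) := by
      push_cast only [Nat.cast_mul, Nat.cast_add, Nat.cast_one]; rw [e1, e2]; exact hhigh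
    exact_mod_cast this
  apply Nat.div_eq_of_lt_le
  · rw [mul_comm]; exact hlow'
  · rw [Nat.succ_mul, mul_comm (yfl N x n) (M N)]
    calc yfl N x (n + 1) < M N * (yfl N x n + 1) := hhigh'
      _ = M N * yfl N x n + M N := by ring

lemma idx_eq (x : ℝ) (n : ℕ) : idx N δ z₀ n x = F N δ z₀ n (yfl N x n) := by
  rfl

include hN in
lemma idx_succ (x : ℝ) (n : ℕ) :
    idx N δ z₀ (n + 1) x = child N δ z₀ n (idx N δ z₀ n x) (yfl N x (n + 1) % M N) := by
  have hM := M_pos hN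
  rw [idx_eq, idx_eq]
  show child N δ z₀ n (F N δ z₀ n (yfl N x (n + 1) / M N)) (yfl N x (n + 1) % M N) = _
  rw [yfl_succ_div hM]

include hN hδ in
lemma good_idx (hδ2 : 1 < 4 * N * δ) (n : ℕ) (x : ℝ) : Good N δ z₀ n (idx N δ z₀ n x) :=
  good_F hN hδ hδ2 n _

include hN hδ in
lemma Sq_idx_succ_subset (x : ℝ) (n : ℕ) :
    Sq N δ z₀ (n + 1) (idx N δ z₀ (n + 1) x) ⊆ Sq N δ z₀ n (idx N δ z₀ n x) := by
  have hM := M_pos hN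
  have hMN : 0 < N := by omega
  rw [idx_succ hN]
  set dd := yfl N x (n + 1) % M N with hdd
  have hddM : dd < M N := Nat.mod_lt _ hM
  have hj : dd / N < M1 N := by rw [Nat.div_lt_iff_lt_mul hMN]; exact hddM
  exact Sq_child_subset hN hδ n _ (gcol_nonneg hN _ _) (gcol_lt hN _ hj)
    (Int.ofNat_nonneg _) (by exact_mod_cast Nat.mod_lt dd hMN)

include hN hδ in
lemma Sq_idx_subset {x : ℝ} {n m : ℕ} (hnm : n ≤ m) :
    Sq N δ z₀ m (idx N δ z₀ m x) ⊆ Sq N δ z₀ n (idx N δ z₀ n x) := by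
  induction m with
  | zero => simp_all
  | succ m ih =>
    rcases Nat.lt_or_ge n (m + 1) with h | h
    · exact (Sq_idx_succ_subset hN hδ x m).trans (ih (by omega))
    · have : n = m + 1 := by omega
      subst this; exact subset_rfl

include hN hδ in
lemma cent_mem (n : ℕ) (x : ℝ) : cent N δ z₀ n x ∈ Sq N δ z₀ n (idx N δ z₀ n x) := by
  have hw := w_pos hN hδ n
  unfold cent Sq
  refine ⟨by simp; linarith, by simp; linarith, by simp; linarith, by simp; linarith⟩

include hN hδ in
lemma cent_cauchy (x : ℝ) : CauchySeq (fun n => cent N δ z₀ n x) := by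
  apply cauchySeq_of_le_geometric (1 / (N:ℝ)) (2 * δ)
  · rw [div_lt_one (by positivity : (0:ℝ) < (N:ℝ))]
    have : (1:ℝ) < 16 := by norm_num
    calc (1:ℝ) < 16 := this
      _ ≤ N := by exact_mod_cast hN
  · intro n
    have h1 : cent N δ z₀ n x ∈ Sq N δ z₀ n (idx N δ z₀ n x) := cent_mem hN hδ n x
    have h2 : cent N δ z₀ (n+1) x ∈ Sq N δ z₀ n (idx N δ z₀ n x) :=
      Sq_idx_succ_subset hN hδ x n (cent_mem hN hδ (n+1) x)
    have := Sq_dist_le (hN := hN) (hδ := hδ) n (idx N δ z₀ n x) h1 h2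
    rw [Complex.dist_eq]
    calc ‖cent N δ z₀ n x - cent N δ z₀ (n+1) x‖ ≤ 2 * w N δ n := this
      _ = 2 * δ * (1 / (N:ℝ)) ^ n := by
          rw [w]; rw [div_pow, one_pow]; ring

include hN hδ in
lemma Phi_tendsto (x : ℝ) :
    Tendsto (fun n => cent N δ z₀ n x) atTop (nhds (Phi N δ z₀ x)) :=
  (cent_cauchy hN hδ x).tendsto_limUnder

include hN hδ in
lemma Phi_mem_Sq (n : ℕ) (x : ℝ) : Phi N δ z₀ x ∈ Sq N δ z₀ n (idx N δ z₀ n x) := by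
  apply (isClosed_Sq n _).mem_of_tendsto (Phi_tendsto hN hδ x)
  filter_upwards [eventually_ge_atTop n] with m hm
  exact Sq_idx_subset hN hδ hm (cent_mem hN hδ m x)

lemma measurable_yfl (n : ℕ) : Measurable (fun x : ℝ => yfl N x n) := by
  apply Measurable.comp (f := fun x : ℝ => ⌊Int.fract x * (M N : ℝ) ^ n⌋)
    (g := Int.toNat) measurable_from_top
  exact Int.measurable_floor.comp (measurable_fract.mul_const _)

lemma measurable_idx_event (n : ℕ) (j : ℤ × ℤ) :
    MeasurableSet {x : ℝ | idx N δ z₀ n x = j} := by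
  have : {x : ℝ | idx N δ z₀ n x = j} =
      (fun x : ℝ => yfl N x n) ⁻¹' {m : ℕ | F N δ z₀ n m = j} := rfl
  rw [this]
  exact measurable_yfl n (by trivial)

lemma measurable_cent (n : ℕ) : Measurable (cent N δ z₀ n) := by
  have : cent N δ z₀ n = (fun m : ℕ =>
      (⟨z₀.re + (F N δ z₀ n m).1 * w N δ n + w N δ n / 2,
        z₀.im + (F N δ z₀ n m).2 * w N δ n + w N δ n / 2⟩ : ℂ)) ∘ (fun x => yfl N x n) := rfl
  rw [this]
  exact measurable_from_top.comp (measurable_yfl n)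

include hN hδ in
lemma measurable_Phi : Measurable (Phi N δ z₀) :=
  measurable_of_tendsto_metrizable' atTop measurable_cent
    (tendsto_pi_nhds.mpr (Phi_tendsto hN hδ))

end Jarnik
end PartC
section PartD
namespace Jarnik
open MeasureTheory Filter Set
variable {N : ℕ} {δ : ℝ} {z₀ : ℂ} (hN : 16 ≤ N) (hδ : 0 < δ)

/-- the natural measure on the Cantor set -/
noncomputable def mu (N : ℕ) (δ : ℝ) (z₀ : ℂ) : Measure ℂ :=
  (volume.restrict (Ico (0:ℝ) 1)).map (Phi N δ z₀)

include hN in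
lemma vol_event (n : ℕ) (j : ℤ × ℤ) :
    volume.restrict (Ico (0:ℝ) 1) {x | idx N δ z₀ n x = j} ≤
      ENNReal.ofReal (1 / (M N : ℝ) ^ n) := by
  have hM := M_pos hN
  have hMr : (0:ℝ) < (M N : ℝ) ^ n := by positivity
  rw [Measure.restrict_apply (measurable_idx_event n j)]
  by_cases hex : ∃ m, m < M N ^ n ∧ F N δ z₀ n m = j
  · obtain ⟨m₀, hm₀lt, hm₀⟩ := hex
    have hsub : {x : ℝ | idx N δ z₀ n x = j} ∩ Ico (0:ℝ) 1 ⊆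
        Ico ((m₀:ℝ) / (M N : ℝ) ^ n) (((m₀:ℝ) + 1) / (M N : ℝ) ^ n) := by
      rintro x ⟨hx, hx0, hx1⟩
      have hfr : Int.fract x = x := Int.fract_eq_self.mpr ⟨hx0, hx1⟩
      have hyl := yfl_lt (N := N) hM x n
      have hym : yfl N x n = m₀ := by
        apply F_inj hN n _ _ hyl hm₀lt
        rw [hm₀]; exact hx
      have hfl : ((m₀ : ℤ) : ℝ) ≤ x * (M N : ℝ) ^ n ∧
          x * (M N : ℝ) ^ n < (m₀ : ℤ) + 1 := by
        have h1 : (yfl N x n : ℤ) = ⌊x * (M N : ℝ) ^ n⌋ := by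
          rw [yfl_floor hM x n, hfr]
        rw [hym] at h1
        constructor
        · rw [h1]; exact Int.floor_le _
        · rw [h1]; exact Int.lt_floor_add_one _
      constructor
      · rw [div_le_iff₀ hMr]; exact_mod_cast hfl.1
      · rw [lt_div_iff₀ hMr]
        have := hfl.2; push_cast at this ⊢; linarith
    calc volume ({x : ℝ | idx N δ z₀ n x = j} ∩ Ico (0:ℝ) 1)
        ≤ volume (Ico ((m₀:ℝ) / (M N : ℝ) ^ n) (((m₀:ℝ) + 1) / (M N : ℝ) ^ n)) :=
          measure_mono hsub
      _ = ENNReal.ofReal (((m₀:ℝ) + 1) / (M N : ℝ) ^ n - (m₀:ℝ) / (M N : ℝ) ^ n) :=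
          Real.volume_Ico
      _ = ENNReal.ofReal (1 / (M N : ℝ) ^ n) := by rw [div_sub_div_same]; norm_num
  · have hempty : {x : ℝ | idx N δ z₀ n x = j} ∩ Ico (0:ℝ) 1 = ∅ := by
      ext x
      simp only [mem_inter_iff, mem_setOf_eq, mem_Ico, mem_empty_iff_false, iff_false, not_and]
      intro hx hx01 hx1
      exact absurd ⟨yfl N x n, yfl_lt hM x n, hx⟩ hex
    rw [hempty]
    simp

include hN hδ in
lemma cover (n : ℕ) (U : Set ℂ) (hU : EMetric.diam U ≤ ENNReal.ofReal (w N δ n)) :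
    mu N δ z₀ U ≤ 25 * ENNReal.ofReal (1 / (M N : ℝ) ^ n) := by
  rcases U.eq_empty_or_nonempty with rfl | ⟨u, hu⟩
  · simp
  have hw := w_pos hN hδ n
  set ww := w N δ n with hww
  set i1 := ⌊(u.re - z₀.re) / ww⌋ with hi1
  set i2 := ⌊(u.im - z₀.im) / ww⌋ with hi2
  have hdist : ∀ z ∈ U, |z.re - u.re| ≤ ww ∧ |z.im - u.im| ≤ ww := by
    intro z hz
    have hed : edist z u ≤ ENNReal.ofReal ww :=
      le_trans (EMetric.edist_le_diam_of_mem hz hu) hU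
    have hd : dist z u ≤ ww := by
      rw [edist_dist] at hed
      exact (ENNReal.ofReal_le_ofReal_iff hw.le).mp hed
    rw [Complex.dist_eq] at hd
    have h1 : |(z - u).re| ≤ ‖z - u‖ := Complex.abs_re_le_norm _
    have h2 : |(z - u).im| ≤ ‖z - u‖ := Complex.abs_im_le_norm _
    rw [Complex.sub_re] at h1
    rw [Complex.sub_im] at h2
    exact ⟨le_trans h1 hd, le_trans h2 hd⟩
  -- helper for floor locations
  have hfloor : ∀ (zr ur : ℝ), |zr - ur| ≤ ww →
      ⌊(ur - z₀.re) / ww⌋ - 1 ≤ ⌊(zr - z₀.re) / ww⌋ ∧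
      ⌊(zr - z₀.re) / ww⌋ ≤ ⌊(ur - z₀.re) / ww⌋ + 1 := by
    intro zr ur habs
    obtain ⟨hl, hr⟩ := abs_le.mp habs
    have key1 : (ur - z₀.re) / ww - 1 ≤ (zr - z₀.re) / ww := by
      rw [div_sub' hw.ne', div_le_div_iff_of_pos_right hw]
      linarith
    have key2 : (zr - z₀.re) / ww ≤ (ur - z₀.re) / ww + 1 := by
      rw [div_add' _ _ _ hw.ne', div_le_div_iff_of_pos_right hw]
      linarith
    constructor
    · calc ⌊(ur - z₀.re) / ww⌋ - 1 = ⌊(ur - z₀.re) / ww - (1:ℤ)⌋ := (Int.floor_sub_intCast _ _).symm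
        _ ≤ ⌊(zr - z₀.re) / ww⌋ := Int.floor_mono (by push_cast; linarith)
    · calc ⌊(zr - z₀.re) / ww⌋ ≤ ⌊(ur - z₀.re) / ww + (1:ℤ)⌋ :=
          Int.floor_mono (by push_cast; linarith)
        _ = ⌊(ur - z₀.re) / ww⌋ + 1 := Int.floor_add_intCast _ _
  set Jf : Finset (ℤ × ℤ) := Finset.Icc (i1 - 1) (i1 + 1) ×ˢ Finset.Icc (i2 - 1) (i2 + 1) with hJf
  have hUV : U ⊆ ⋃ j ∈ Jf, Sq N δ z₀ n j := by
    intro z hz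
    obtain ⟨hre, him⟩ := hdist z hz
    have hmem := mem_Sq_floor hN hδ (z₀ := z₀) n z
    have hb1 := hfloor z.re u.re hre
    -- imaginary part analog : reuse hfloor with shifted anchor? do directly
    have hb2 : i2 - 1 ≤ ⌊(z.im - z₀.im) / ww⌋ ∧ ⌊(z.im - z₀.im) / ww⌋ ≤ i2 + 1 := by
      obtain ⟨hl, hr⟩ := abs_le.mp him
      have key1 : (u.im - z₀.im) / ww - 1 ≤ (z.im - z₀.im) / ww := by
        rw [div_sub' hw.ne', div_le_div_iff_of_pos_right hw]
        linarith
      have key2 : (z.im - z₀.im) / ww ≤ (u.im - z₀.im) / ww + 1 := by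
        rw [div_add' _ _ _ hw.ne', div_le_div_iff_of_pos_right hw]
        linarith
      constructor
      · calc i2 - 1 = ⌊(u.im - z₀.im) / ww - (1:ℤ)⌋ := (Int.floor_sub_intCast _ _).symm
          _ ≤ ⌊(z.im - z₀.im) / ww⌋ := Int.floor_mono (by push_cast; linarith)
      · calc ⌊(z.im - z₀.im) / ww⌋ ≤ ⌊(u.im - z₀.im) / ww + (1:ℤ)⌋ :=
            Int.floor_mono (by push_cast; linarith)
          _ = i2 + 1 := Int.floor_add_intCast _ _
    refine mem_iUnion₂.mpr ⟨(⌊(z.re - z₀.re) / ww⌋, ⌊(z.im - z₀.im) / ww⌋), ?_, hmem⟩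
    rw [hJf]
    rw [Finset.mem_product]
    constructor
    · rw [Finset.mem_Icc]; exact ⟨hb1.1, hb1.2⟩
    · rw [Finset.mem_Icc]; exact ⟨hb2.1, hb2.2⟩
  have hVmeas : MeasurableSet (⋃ j ∈ Jf, Sq N δ z₀ n j) :=
    (Jf : Finset (ℤ × ℤ)).measurableSet_biUnion (fun j _ => measurableSet_Sq n j)
  set Jf' : Finset (ℤ × ℤ) := Finset.Icc (i1 - 2) (i1 + 2) ×ˢ Finset.Icc (i2 - 2) (i2 + 2)
    with hJf'
  have hpre : Phi N δ z₀ ⁻¹' (⋃ j ∈ Jf, Sq N δ z₀ n j) ⊆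
      ⋃ j' ∈ Jf', {x : ℝ | idx N δ z₀ n x = j'} := by
    intro x hx
    obtain ⟨j, hj, hxj⟩ := mem_iUnion₂.mp hx
    have hown := Phi_mem_Sq (z₀ := z₀) hN hδ n x
    -- overlap of two squares containing Phi x
    set kk := idx N δ z₀ n x with hkk
    obtain ⟨a1, a2, a3, a4⟩ := hown
    obtain ⟨b1, b2, b3, b4⟩ := hxj
    have hmul : ∀ s t : ℤ, (s:ℝ) * ww ≤ ((t:ℝ) + 1) * ww → s ≤ t + 1 := by
      intro s t h
      have : (s:ℝ) ≤ (t:ℝ) + 1 := le_of_mul_le_mul_right h hw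
      exact_mod_cast this
    have o1 : kk.1 ≤ j.1 + 1 := hmul _ _ (by linarith)
    have o2 : j.1 ≤ kk.1 + 1 := hmul _ _ (by linarith)
    have o3 : kk.2 ≤ j.2 + 1 := hmul _ _ (by linarith)
    have o4 : j.2 ≤ kk.2 + 1 := hmul _ _ (by linarith)
    rw [hJf, Finset.mem_product, Finset.mem_Icc, Finset.mem_Icc] at hj
    refine mem_iUnion₂.mpr ⟨kk, ?_, rfl⟩
    rw [hJf', Finset.mem_product, Finset.mem_Icc, Finset.mem_Icc]
    omega
  have hcard : Jf'.card = 25 := by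
    rw [hJf', Finset.card_product, Int.card_Icc, Int.card_Icc]
    have e1 : (i1 + 2 + 1 - (i1 - 2)).toNat = 5 := by omega
    have e2 : (i2 + 2 + 1 - (i2 - 2)).toNat = 5 := by omega
    rw [e1, e2]
  calc mu N δ z₀ U ≤ mu N δ z₀ (⋃ j ∈ Jf, Sq N δ z₀ n j) := measure_mono hUV
    _ = volume.restrict (Ico (0:ℝ) 1) (Phi N δ z₀ ⁻¹' (⋃ j ∈ Jf, Sq N δ z₀ n j)) :=
        Measure.map_apply (measurable_Phi hN hδ) hVmeas
    _ ≤ volume.restrict (Ico (0:ℝ) 1) (⋃ j' ∈ Jf', {x : ℝ | idx N δ z₀ n x = j'}) :=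
        measure_mono hpre
    _ ≤ ∑ j' ∈ Jf', volume.restrict (Ico (0:ℝ) 1) {x : ℝ | idx N δ z₀ n x = j'} :=
        measure_biUnion_finset_le Jf' _
    _ ≤ ∑ _j' ∈ Jf', ENNReal.ofReal (1 / (M N : ℝ) ^ n) :=
        Finset.sum_le_sum (fun j' _ => vol_event hN n j')
    _ = 25 * ENNReal.ofReal (1 / (M N : ℝ) ^ n) := by
        rw [Finset.sum_const, hcard, nsmul_eq_mul]
        norm_num

include hN hδ in
lemma mu_univ : mu N δ z₀ univ = 1 := by
  rw [mu, Measure.map_apply (measurable_Phi hN hδ) MeasurableSet.univ]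
  rw [preimage_univ, Measure.restrict_apply MeasurableSet.univ, univ_inter,
    Real.volume_Ico]
  norm_num

end Jarnik
end PartD
section PartE
namespace Jarnik
open MeasureTheory Filter Set
variable {N : ℕ} {δ : ℝ} {z₀ : ℂ} (hN : 16 ≤ N) (hδ : 0 < δ)

include hN hδ in
lemma Phi_mem_badC (hδ2 : 1 < 4 * N * δ) (x : ℝ) : Phi N δ z₀ x ∈ badC := by
  refine ⟨KK N, KK_pos hN, ?_⟩
  intro p q hq
  have hNR : (1:ℝ) < N := by
    have : (16:ℝ) ≤ N := by exact_mod_cast hN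
    linarith
  have h4 : (0:ℝ) < 4 * N * δ := by linarith
  obtain ⟨n, hn⟩ := pow_unbounded_of_one_lt (‖(q : ℂ)‖ ^ 2 * (4 * N * δ)) hNR
  have hTh : ‖(q : ℂ)‖ ^ 2 ≤ Th N δ n := by
    rw [Th, le_div_iff₀ h4]
    exact hn.le
  exact good_idx hN hδ hδ2 n x p q hq hTh _ (Phi_mem_Sq hN hδ n x)

include hN hδ in
lemma Phi_mem_root (x : ℝ) : Phi N δ z₀ x ∈ Sq N δ z₀ 0 ((0:ℤ), (0:ℤ)) :=
  Phi_mem_Sq hN hδ 0 x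

include hN hδ in
lemma Phi_dist (x : ℝ) : ‖Phi N δ z₀ x - (z₀ + (δ/2 : ℝ) + (δ/2 : ℝ) * Complex.I)‖ ≤ δ := by
  have h := Phi_mem_root (z₀ := z₀) hN hδ x
  obtain ⟨h1, h2, h3, h4⟩ := h
  have hw0 : w N δ 0 = δ := by simp [w]
  rw [hw0] at h1 h2 h3 h4
  push_cast at h1 h2 h3 h4
  set z := Phi N δ z₀ x
  have hre : |(z - (z₀ + (δ/2 : ℝ) + (δ/2 : ℝ) * Complex.I)).re| ≤ δ / 2 := by
    simp only [Complex.sub_re, Complex.add_re, Complex.ofReal_re, Complex.mul_re,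
      Complex.I_re, Complex.I_im, Complex.ofReal_im]
    rw [abs_le]
    constructor <;> [nlinarith; nlinarith]
  have him : |(z - (z₀ + (δ/2 : ℝ) + (δ/2 : ℝ) * Complex.I)).im| ≤ δ / 2 := by
    simp only [Complex.sub_im, Complex.add_im, Complex.ofReal_im, Complex.mul_im,
      Complex.I_re, Complex.I_im, Complex.ofReal_re]
    rw [abs_le]
    constructor <;> [nlinarith; nlinarith]
  calc ‖_‖ ≤ _ := Complex.norm_le_abs_re_add_abs_im _
    _ ≤ δ := by linarith

end Jarnik
end PartE
section PartF
namespace Jarnik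
open MeasureTheory Filter Set
open scoped NNReal ENNReal

lemma lower_bound (c : ℂ) (r : ℝ) (hr : 0 < r) (d : ℝ≥0) (hd : (d : ℝ≥0∞) < 2) :
    (d : ℝ≥0∞) ≤ dimH (Metric.ball c r ∩ badC) := by
  have hd2 : (d : ℝ) < 2 := by exact_mod_cast hd
  set e : ℝ := 2 - (d : ℝ) with he
  have hepos : 0 < e := by simp [he]; linarith
  set A : ℝ := (8 : ℝ) ^ (1 / e) with hA
  have hA0 : 0 ≤ A := Real.rpow_nonneg (by norm_num) _
  obtain ⟨N, hNge⟩ := exists_nat_ge (A + 1 / r + 16)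
  have hrinv : 0 < 1 / r := by positivity
  have hN : 16 ≤ N := by
    have : (16 : ℝ) ≤ (N : ℝ) := by linarith
    exact_mod_cast this
  set δ : ℝ := r / 4 with hδdef
  have hδ : 0 < δ := by positivity
  have hNR : (1 : ℝ) < N := by
    have : (16 : ℝ) ≤ (N : ℝ) := by linarith
    linarith
  have hNpos : (0 : ℝ) < N := by linarith
  have hδ2 : 1 < 4 * (N : ℝ) * δ := by
    have h1 : 1 / r < (N : ℝ) := by linarith
    have h2 : (1 / r) * r < (N : ℝ) * r := by
      exact mul_lt_mul_of_pos_right h1 hr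
    rw [one_div_mul_cancel hr.ne'] at h2
    rw [hδdef]
    nlinarith
  have h8 : (8 : ℝ) ≤ (N : ℝ) ^ e := by
    have hAN : A ≤ (N : ℝ) := by linarith
    calc (8 : ℝ) = ((8 : ℝ) ^ (1 / e)) ^ e := by
          rw [← Real.rpow_mul (by norm_num : (0:ℝ) ≤ 8), one_div_mul_cancel hepos.ne',
            Real.rpow_one]
      _ ≤ (N : ℝ) ^ e := Real.rpow_le_rpow hA0 hAN hepos.le
  -- N^d ≤ M
  have hNNM : ((N * N : ℕ) : ℝ) ≤ ((8 * M N : ℕ) : ℝ) := by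
    have h1 : N ≤ 8 * (N / 4) := by omega
    have h2 : (N / 4) * N ≤ M1 N * N := Nat.mul_le_mul_right _ (M1_ge hN)
    have h3 : N * N ≤ (8 * (N / 4)) * N := Nat.mul_le_mul_right _ h1
    have h4 : (8 * (N / 4)) * N = 8 * ((N / 4) * N) := by ring
    have : N * N ≤ 8 * M N := by
      unfold M
      calc N * N ≤ 8 * ((N / 4) * N) := by omega
        _ ≤ 8 * (M1 N * N) := by omega
    exact_mod_cast this
  set P : ℝ := (N : ℝ) ^ (d : ℝ) with hP
  have hPpos : 0 < P := Real.rpow_pos_of_pos hNpos _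
  have hPM : P ≤ (M N : ℝ) := by
    have key : P * (N : ℝ) ^ e = (N : ℝ) * (N : ℝ) := by
      rw [hP, ← Real.rpow_add hNpos, he]
      rw [show (d : ℝ) + (2 - (d : ℝ)) = 2 by ring]
      rw [show (2:ℝ) = ((2:ℕ):ℝ) by norm_num, Real.rpow_natCast]
      ring
    have hNe : (0:ℝ) < (N : ℝ) ^ e := Real.rpow_pos_of_pos hNpos _
    have hNN : (N : ℝ) * (N : ℝ) ≤ 8 * (M N : ℝ) := by push_cast at hNNM; linarith
    -- P = (N*N) / N^e ≤ 8M/8 = M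
    have hPe : P = ((N : ℝ) * (N : ℝ)) / (N : ℝ) ^ e := by
      field_simp [key]; rw [key]; ring
    rw [hPe]
    calc ((N : ℝ) * (N : ℝ)) / (N : ℝ) ^ e ≤ (8 * (M N : ℝ)) / 8 :=
          div_le_div₀ (by positivity) hNN (by norm_num) h8
      _ = (M N : ℝ) := by ring
  set z₀ : ℂ := c - (δ/2 : ℝ) - (δ/2 : ℝ) * Complex.I with hz₀def
  have hz₀ : z₀ + (δ/2 : ℝ) + (δ/2 : ℝ) * Complex.I = c := by rw [hz₀def]; ring
  -- the image is inside the target set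
  have hball : ∀ x : ℝ, Phi N δ z₀ x ∈ Metric.ball c r ∩ badC := by
    intro x
    constructor
    · rw [Metric.mem_ball, Complex.dist_eq]
      have := Phi_dist (z₀ := z₀) hN hδ x
      rw [hz₀] at this
      calc ‖Phi N δ z₀ x - c‖ ≤ δ := this
        _ < r := by rw [hδdef]; linarith
    · exact Phi_mem_badC hN hδ hδ2 x
  set μ : Measure ℂ := mu N δ z₀ with hμ
  have hμ1 : 1 ≤ μ (Metric.ball c r ∩ badC) := by
    have hpre : Phi N δ z₀ ⁻¹' (Metric.ball c r ∩ badC) = univ :=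
      eq_univ_of_forall (fun x => hball x)
    have hle := Measure.le_map_apply (f := Phi N δ z₀) (μ := volume.restrict (Ico (0:ℝ) 1))
      (measurable_Phi hN hδ).aemeasurable (Metric.ball c r ∩ badC)
    rw [hpre] at hle
    have : (volume.restrict (Ico (0:ℝ) 1)) univ = 1 := by
      rw [Measure.restrict_apply_univ, Real.volume_Ico]
      norm_num
    rw [this] at hle
    exact le_trans hle (le_of_eq rfl)
  set C : ℝ≥0∞ := 25 * ENNReal.ofReal (P / δ ^ (d : ℝ)) with hC
  have hdrpos : (0:ℝ) < δ ^ (d : ℝ) := Real.rpow_pos_of_pos hδ _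
  have hC0 : C ≠ 0 := by
    rw [hC]
    apply mul_ne_zero (by norm_num)
    have : (0:ℝ≥0∞) < ENNReal.ofReal (P / δ ^ (d:ℝ)) :=
      ENNReal.ofReal_pos.mpr (by positivity)
    exact this.ne'
  have hCtop : C ≠ ⊤ := by
    rw [hC]
    exact ENNReal.mul_ne_top (by norm_num) ENNReal.ofReal_ne_top
  -- the key mass-distribution estimate
  have claim : ∀ s : Set ℂ, EMetric.diam s ≤ ENNReal.ofReal (w N δ 1) →
      μ s ≤ C * EMetric.diam s ^ (d : ℝ) := by
    intro s hs
    have hMpos := M_pos hN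
    have hMR : (1:ℝ) < (M N : ℝ) := by
      have h2 : 2 ≤ M N := by
        have := M1_ge hN
        have : 4 ≤ M1 N := by omega
        unfold M at *
        nlinarith
      exact_mod_cast Nat.lt_of_lt_of_le Nat.one_lt_two h2
    by_cases h0 : EMetric.diam s = 0
    · -- zero diameter: measure is zero
      have hb : ∀ n : ℕ, μ s ≤ 25 * ENNReal.ofReal (1 / (M N : ℝ) ^ n) := fun n =>
        cover hN hδ n s (by rw [h0]; exact zero_le)
      have h1 : Tendsto (fun n : ℕ => (1 / (M N : ℝ)) ^ n) atTop (nhds 0) := by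
        apply tendsto_pow_atTop_nhds_zero_of_lt_one (by positivity)
        rw [div_lt_one (by linarith)]
        linarith
      have htend : Tendsto (fun n : ℕ => 25 * ENNReal.ofReal (1 / (M N : ℝ) ^ n)) atTop
          (nhds 0) := by
        have h2 : Tendsto (fun n : ℕ => ENNReal.ofReal ((1 / (M N : ℝ)) ^ n)) atTop
            (nhds 0) := by
          rw [show (0 : ℝ≥0∞) = ENNReal.ofReal 0 by simp]
          exact ENNReal.tendsto_ofReal h1
        have h3 := ENNReal.Tendsto.const_mul h2 (Or.inr (by norm_num : (25:ℝ≥0∞) ≠ ⊤))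
        simp only [mul_zero] at h3
        convert h3 using 2 with n
        rw [one_div_pow]
      have : μ s ≤ 0 := ge_of_tendsto htend (Eventually.of_forall hb)
      exact le_trans this zero_le
    · have hlt : EMetric.diam s < ⊤ := lt_of_le_of_lt hs ENNReal.ofReal_lt_top
      set e0 : ℝ := (EMetric.diam s).toReal with he0
      have he0pos : 0 < e0 := ENNReal.toReal_pos h0 hlt.ne
      have hex : ∃ m : ℕ, ENNReal.ofReal (w N δ (m + 1)) ≤ EMetric.diam s := by
        obtain ⟨m, hm⟩ := pow_unbounded_of_one_lt (δ / e0) hNR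
        refine ⟨m, ?_⟩
        have hwm : w N δ (m + 1) ≤ e0 := by
          rw [w, div_le_iff₀ (by positivity : (0:ℝ) < (N:ℝ) ^ (m+1))]
          have hmm : (N:ℝ) ^ m ≤ (N:ℝ) ^ (m+1) := pow_le_pow_right₀ (by linarith) (by omega)
          have := (div_lt_iff₀ he0pos).mp hm
          nlinarith
        calc ENNReal.ofReal (w N δ (m + 1)) ≤ ENNReal.ofReal e0 :=
              ENNReal.ofReal_le_ofReal hwm
          _ = EMetric.diam s := ENNReal.ofReal_toReal hlt.ne
      set n := Nat.find hex with hn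
      have hn1 : ENNReal.ofReal (w N δ (n + 1)) ≤ EMetric.diam s := Nat.find_spec hex
      have hn2 : EMetric.diam s ≤ ENNReal.ofReal (w N δ n) := by
        rcases Nat.eq_zero_or_pos n with h | h
        · rw [h]
          exact hs.trans (ENNReal.ofReal_le_ofReal (w_anti hN hδ 0))
        · have hm : n - 1 < n := by omega
          have hmin := Nat.find_min hex hm
          rw [show n - 1 + 1 = n by omega] at hmin
          exact (not_le.mp hmin).le
      have hbound := cover (z₀ := z₀) hN hδ n s hn2
      -- real computation
      have hpow : ((N : ℝ) ^ (n + 1)) ^ (d : ℝ) = P ^ (n + 1) := by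
        rw [← Real.rpow_natCast (N : ℝ) (n + 1), ← Real.rpow_mul hNpos.le,
          mul_comm ((n + 1 : ℕ) : ℝ) (d : ℝ), Real.rpow_mul hNpos.le, hP,
          Real.rpow_natCast]
      have hwpow : (w N δ (n + 1)) ^ (d : ℝ) = δ ^ (d : ℝ) / P ^ (n + 1) := by
        rw [w, Real.div_rpow hδ.le (by positivity), hpow]
      have hPn : P ^ n ≤ (M N : ℝ) ^ n := pow_le_pow_left₀ hPpos.le hPM n
      have hPnpos : (0:ℝ) < P ^ n := by positivity
      have hreal : 1 / (M N : ℝ) ^ n ≤ P / δ ^ (d : ℝ) * (w N δ (n + 1)) ^ (d : ℝ) := by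
        rw [hwpow]
        have heq : P / δ ^ (d : ℝ) * (δ ^ (d : ℝ) / P ^ (n + 1)) = 1 / P ^ n := by
          field_simp
          ring
        rw [heq]
        exact one_div_le_one_div_of_le hPnpos hPn
      calc μ s ≤ 25 * ENNReal.ofReal (1 / (M N : ℝ) ^ n) := hbound
        _ ≤ 25 * ENNReal.ofReal (P / δ ^ (d : ℝ) * (w N δ (n + 1)) ^ (d : ℝ)) := by
            exact mul_le_mul_right (ENNReal.ofReal_le_ofReal hreal) _
        _ = C * ENNReal.ofReal ((w N δ (n + 1)) ^ (d : ℝ)) := by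
            rw [hC, ENNReal.ofReal_mul (by positivity)]
            ring
        _ = C * (ENNReal.ofReal (w N δ (n + 1))) ^ (d : ℝ) := by
            rw [ENNReal.ofReal_rpow_of_pos (w_pos hN hδ (n + 1))]
        _ ≤ C * EMetric.diam s ^ (d : ℝ) := by
            exact mul_le_mul_right (ENNReal.rpow_le_rpow hn1 d.coe_nonneg) _
  -- mass distribution principle
  have hH : C⁻¹ • μ ≤ μH[(d : ℝ)] := by
    apply Measure.le_hausdorffMeasure _ _ (ENNReal.ofReal (w N δ 1))
      (ENNReal.ofReal_pos.mpr (w_pos hN hδ 1))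
    intro s hs
    have hcl := claim s hs
    rw [Measure.smul_apply, smul_eq_mul]
    calc C⁻¹ * μ s ≤ C⁻¹ * (C * EMetric.diam s ^ (d : ℝ)) := mul_le_mul_right hcl _
      _ = EMetric.diam s ^ (d : ℝ) := by
          rw [← mul_assoc, ENNReal.inv_mul_cancel hC0 hCtop, one_mul]
  have hfin : μH[(d : ℝ)] (Metric.ball c r ∩ badC) ≠ 0 := by
    have h1 : C⁻¹ ≤ μH[(d : ℝ)] (Metric.ball c r ∩ badC) := by
      calc C⁻¹ = C⁻¹ * 1 := by rw [mul_one]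
        _ ≤ C⁻¹ * μ (Metric.ball c r ∩ badC) := mul_le_mul_right hμ1 _
        _ = (C⁻¹ • μ) (Metric.ball c r ∩ badC) := by
            rw [Measure.smul_apply, smul_eq_mul]
        _ ≤ μH[(d : ℝ)] (Metric.ball c r ∩ badC) := Measure.le_iff'.mp hH _
    intro h
    rw [h, le_zero_iff, ENNReal.inv_eq_zero] at h1
    exact hCtop h1
  exact le_dimH_of_hausdorffMeasure_ne_zero hfin

end Jarnik
end PartF

/-- Complex Jarník theorem: `𝔅` is thick, i.e. every disc of positive radius meets `𝔅` in a
set of Hausdorff dimension `2`. -/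
theorem stmt17 (c : ℂ) (r : ℝ) (hr : 0 < r) :
    dimH (Metric.ball c r ∩ badC) = 2 := by
  apply le_antisymm
  · calc dimH (Metric.ball c r ∩ badC) ≤ dimH (Set.univ : Set ℂ) :=
        dimH_mono (Set.subset_univ _)
      _ = 2 := by
        rw [Real.dimH_univ_eq_finrank, Complex.finrank_real_complex]; rfl
  · apply ENNReal.le_of_forall_nnreal_lt
    intro d hd
    exact Jarnik.lower_bound c r hr d hd
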